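/- arXiv:2209.14543 — 3 statements merged into one kernel-verified Lean document; each statement's English description precedes it below -/
import Mathlib

section
/- Let ℓ ≥ 1 and let S = {i₁ < ⋯ < i_m} ⊆ {1,…,ℓ} be nonempty, with conventions i₀ = 0 and i_{m+1} = ℓ+1. Then the number of integers n with 1 ≤ n ≤ i_j − 1 such that |S ∩ {n, …, i_j − 1}| is even (including zero) equals T₁(j) + (i_j − i_{j−1} − 1), where T₁(j) = Σ_{k=1}^{⌊(j+1)/2⌋−1} (i_{j−2k} − i_{j−2k−1}). -/
open Finset

lemma shift_sum (f : ℕ → ℕ) : ∀ K : ℕ, ∑ k ∈ Finset.Icc 1 (K+1), f k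
    = f 1 + ∑ k ∈ Finset.Icc 1 K, f (k+1) := by
  intro K
  induction K with
  | zero => simp
  | succ K ih =>
    rw [Finset.sum_Icc_succ_top (by omega), ih, Finset.sum_Icc_succ_top (by omega)]
    ring

lemma key : ∀ j, 1 ≤ j → ∀ (i : ℕ → ℕ), i 0 = 0 → (∀ a b, a < b → b ≤ j → i a < i b) →
    ((Finset.Icc 1 (i j - 1)).filter
        (fun n => Even (((Finset.Icc 1 (j - 1)).filter (fun t => n ≤ i t)).card))).card
      = (∑ k ∈ Finset.Icc 1 ((j + 1) / 2 - 1), (i (j - 2 * k) - i (j - 2 * k - 1)))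
        + (i j - i (j - 1) - 1) := by
  intro j
  induction j using Nat.strong_induction_on with
  | _ j IHmain =>
    intro hj i h0 hmono
    match j, hj with
    | 1, _ =>
      simp [h0, Nat.card_Icc]
    | 2, _ =>
      have h1 : 1 ≤ i 1 := by
        have := hmono 0 1 (by norm_num) (by norm_num); omega
      have h12 : i 1 < i 2 := hmono 1 2 (by norm_num) (by norm_num)
      have hcard : ∀ n, (((Finset.Icc 1 1).filter (fun t => n ≤ i t)).card) = if n ≤ i 1 then 1 else 0 := by
        intro n
        by_cases h : n ≤ i 1 <;> simp [Finset.Icc_self, Finset.filter_singleton, h]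
      simp only [hcard]
      have hset : (Finset.Icc 1 (i 2 - 1)).filter
          (fun n => Even (if n ≤ i 1 then 1 else 0)) = Finset.Ioc (i 1) (i 2 - 1) := by
        ext n
        by_cases h : n ≤ i 1 <;> simp [h, Finset.mem_Icc, Finset.mem_Ioc] <;> omega
      rw [hset]
      simp [Nat.card_Ioc]
      omega
    | (j+3), _ =>
      have IH := IHmain (j+1) (by omega) (by omega) i h0
        (fun a b hab hb => hmono a b hab (by omega))
      simp only [show j + 1 - 1 = j from rfl, show j + 1 + 1 = j + 2 from rfl] at IH
      simp only [show j + 3 - 1 = j + 2 from rfl, show j + 3 + 1 = j + 4 from rfl]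
      have hle : ∀ a b, a ≤ b → b ≤ j + 3 → i a ≤ i b := by
        intro a b hab hb
        rcases eq_or_lt_of_le hab with rfl | h
        · exact le_rfl
        · exact (hmono a b h hb).le
      have h1 : 1 ≤ i (j+1) := by have := hmono 0 (j+1) (by omega) (by omega); omega
      have h12 : i (j+1) < i (j+2) := hmono _ _ (by omega) (by omega)
      have h23 : i (j+2) < i (j+3) := hmono _ _ (by omega) (by omega)
      have hj1 : i j < i (j+1) := hmono _ _ (by omega) (by omega)
      -- partition
      have hsplit : Finset.Icc 1 (i (j+3) - 1)
          = (Finset.Icc 1 (i (j+1)) ∪ Finset.Ioc (i (j+1)) (i (j+2)))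
            ∪ Finset.Ioc (i (j+2)) (i (j+3) - 1) := by
        ext n
        simp only [Finset.mem_union, Finset.mem_Icc, Finset.mem_Ioc]
        omega
      rw [hsplit, Finset.filter_union, Finset.filter_union,
        Finset.card_union_of_disjoint, Finset.card_union_of_disjoint]
      · -- main computation
        -- piece 3
        have hP3 : ((Finset.Ioc (i (j+2)) (i (j+3) - 1)).filter
            (fun n => Even (((Finset.Icc 1 (j + 2)).filter (fun t => n ≤ i t)).card))).card
            = i (j+3) - 1 - i (j+2) := by
          rw [Finset.filter_true_of_mem, Nat.card_Ioc]
          intro n hn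
          rw [Finset.mem_Ioc] at hn
          have : (Finset.Icc 1 (j + 2)).filter (fun t => n ≤ i t) = ∅ := by
            rw [Finset.filter_eq_empty_iff]
            intro t ht
            rw [Finset.mem_Icc] at ht
            have : i t ≤ i (j+2) := hle t (j+2) ht.2 (by omega)
            omega
          rw [this]; simp
        -- piece 2
        have hP2 : ((Finset.Ioc (i (j+1)) (i (j+2))).filter
            (fun n => Even (((Finset.Icc 1 (j + 2)).filter (fun t => n ≤ i t)).card))).card = 0 := by
          rw [Finset.card_eq_zero, Finset.filter_eq_empty_iff]
          intro n hn
          rw [Finset.mem_Ioc] at hn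
          have : (Finset.Icc 1 (j + 2)).filter (fun t => n ≤ i t) = {j + 2} := by
            ext t
            simp only [Finset.mem_filter, Finset.mem_Icc, Finset.mem_singleton]
            constructor
            · rintro ⟨⟨ht1, ht2⟩, hnt⟩
              by_contra hne
              have : i t ≤ i (j+1) := hle t (j+1) (by omega) (by omega)
              omega
            · rintro rfl
              exact ⟨⟨by omega, le_rfl⟩, hn.2⟩
          rw [this]; simp
        -- piece 1
        have hP1 : ((Finset.Icc 1 (i (j+1))).filter
            (fun n => Even (((Finset.Icc 1 (j + 2)).filter (fun t => n ≤ i t)).card))).card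
            = ((Finset.Icc 1 (i (j+1) - 1)).filter
                (fun n => Even (((Finset.Icc 1 j).filter (fun t => n ≤ i t)).card))).card + 1 := by
          have hstep : ∀ n ∈ Finset.Icc 1 (i (j+1)),
              (Even (((Finset.Icc 1 (j + 2)).filter (fun t => n ≤ i t)).card)
                ↔ Even (((Finset.Icc 1 j).filter (fun t => n ≤ i t)).card)) := by
            intro n hn
            rw [Finset.mem_Icc] at hn
            have hins : (Finset.Icc 1 (j + 2)).filter (fun t => n ≤ i t)
                = insert (j+2) (insert (j+1) ((Finset.Icc 1 j).filter (fun t => n ≤ i t))) := by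
              ext t
              simp only [Finset.mem_filter, Finset.mem_Icc, Finset.mem_insert]
              constructor
              · rintro ⟨⟨ht1, ht2⟩, hnt⟩
                rcases Nat.lt_or_ge t (j+1) with h | h
                · right; right; exact ⟨⟨ht1, by omega⟩, hnt⟩
                · omega
              · rintro (rfl | rfl | ⟨⟨ht1, ht2⟩, hnt⟩)
                · exact ⟨⟨by omega, le_rfl⟩, le_trans hn.2 h12.le⟩
                · exact ⟨⟨by omega, by omega⟩, hn.2⟩
                · exact ⟨⟨ht1, by omega⟩, hnt⟩
            rw [hins, Finset.card_insert_of_notMem, Finset.card_insert_of_notMem]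
            · simp [Nat.even_add_one, parity_simps]
            · intro h
              have := (Finset.mem_filter.1 h).1
              rw [Finset.mem_Icc] at this; omega
            · intro h
              rcases Finset.mem_insert.1 h with h | h
              · omega
              · have := (Finset.mem_filter.1 h).1
                rw [Finset.mem_Icc] at this; omega
          rw [Finset.filter_congr hstep]
          have hins2 : Finset.Icc 1 (i (j+1)) = insert (i (j+1)) (Finset.Icc 1 (i (j+1) - 1)) := by
            ext n
            simp only [Finset.mem_Icc, Finset.mem_insert]
            omega
          rw [hins2, Finset.filter_insert, if_pos, Finset.card_insert_of_notMem]
          · intro h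
            have := (Finset.mem_filter.1 h).1
            rw [Finset.mem_Icc] at this; omega
          · have : (Finset.Icc 1 j).filter (fun t => i (j+1) ≤ i t) = ∅ := by
              rw [Finset.filter_eq_empty_iff]
              intro t ht
              rw [Finset.mem_Icc] at ht
              have : i t ≤ i j := hle t j ht.2 (by omega)
              omega
            rw [this]; simp
        rw [hP3, hP2, hP1, IH]
        -- sum manipulation
        have hK : (j + 4) / 2 - 1 = ((j + 2) / 2 - 1) + 1 := by omega
        have hsum : (∑ k ∈ Finset.Icc 1 ((j + 4) / 2 - 1), (i (j+3 - 2 * k) - i (j+3 - 2 * k - 1)))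
            = (i (j+1) - i j)
              + ∑ k ∈ Finset.Icc 1 ((j + 2) / 2 - 1), (i (j+1 - 2 * k) - i (j+1 - 2 * k - 1)) := by
          rw [hK, shift_sum]
          have hterms : ∀ k ∈ Finset.Icc 1 ((j + 2) / 2 - 1),
              i (j+3 - 2 * (k+1)) - i (j+3 - 2 * (k+1) - 1)
                = i (j+1 - 2 * k) - i (j+1 - 2 * k - 1) := by
            intro k hk
            congr 2 <;> omega
          rw [Finset.sum_congr rfl hterms]
          congr 2 <;> omega
        rw [hsum]
        have hs : ∀ k ∈ Finset.Icc 1 ((j + 2) / 2 - 1),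
            i (j+1 - 2 * k - 1) ≤ i (j+1 - 2 * k) := by
          intro k hk
          rw [Finset.mem_Icc] at hk
          apply hle <;> omega
        omega
      · -- disjointness inner
        rw [Finset.disjoint_left]
        intro n hn hn'
        have h1 := (Finset.mem_filter.1 hn).1
        have h2 := (Finset.mem_filter.1 hn').1
        rw [Finset.mem_Icc] at h1
        rw [Finset.mem_Ioc] at h2
        omega
      · rw [Finset.disjoint_left]
        intro n hn hn'
        have h2 := (Finset.mem_filter.1 hn').1
        rw [Finset.mem_Ioc] at h2
        rcases Finset.mem_union.1 hn with h | h
        · have h1 := (Finset.mem_filter.1 h).1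
          rw [Finset.mem_Icc] at h1
          omega
        · have h1 := (Finset.mem_filter.1 h).1
          rw [Finset.mem_Ioc] at h1
          omega

/-- counting intervals `[n, i_j - 1]` with an even (possibly zero)
number of elements of `S`. -/
theorem stmt15 (ℓ m : ℕ) (hℓ : 1 ≤ ℓ) (hm : 1 ≤ m)
    (i : ℕ → ℕ) (h0 : i 0 = 0) (htop : i (m + 1) = ℓ + 1)
    (hmono : ∀ k ≤ m, i k < i (k + 1))
    (j : ℕ) (hj : 1 ≤ j) (hjm : j ≤ m) :
    (((Finset.Icc 1 (i j - 1)).filter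
        (fun n => Even ((((Finset.Icc 1 m).image i) ∩ Finset.Icc n (i j - 1)).card))).card : ℤ)
      = (∑ k ∈ Finset.Icc 1 ((j + 1) / 2 - 1),
          ((i (j - 2 * k) : ℤ) - (i (j - 2 * k - 1) : ℤ)))
        + ((i j : ℤ) - (i (j - 1) : ℤ) - 1) := by
  have hstrict : ∀ a b, a < b → b ≤ m + 1 → i a < i b := by
    intro a b
    induction b with
    | zero => omega
    | succ b ihb =>
      intro hab hb
      rcases Nat.lt_or_ge a b with h | h
      · exact lt_trans (ihb h (by omega)) (hmono b (by omega))
      · have : a = b := by omega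
        subst this
        exact hmono a (by omega)
  have hle : ∀ a b, a ≤ b → b ≤ m + 1 → i a ≤ i b := by
    intro a b hab hb
    rcases eq_or_lt_of_le hab with rfl | h
    · exact le_rfl
    · exact (hstrict a b h hb).le
  have hjpos : 1 ≤ i j := by have := hstrict 0 j (by omega) (by omega); omega
  -- rewrite inner cardinality
  have hcard : ∀ n ∈ Finset.Icc 1 (i j - 1),
      (((Finset.Icc 1 m).image i) ∩ Finset.Icc n (i j - 1)).card
        = ((Finset.Icc 1 (j - 1)).filter (fun t => n ≤ i t)).card := by
    intro n hn
    have hset : ((Finset.Icc 1 m).image i) ∩ Finset.Icc n (i j - 1)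
        = ((Finset.Icc 1 (j - 1)).filter (fun t => n ≤ i t)).image i := by
      ext x
      simp only [Finset.mem_inter, Finset.mem_image, Finset.mem_Icc, Finset.mem_filter]
      constructor
      · rintro ⟨⟨t, ⟨ht1, ht2⟩, rfl⟩, hnx, hxj⟩
        refine ⟨t, ⟨⟨ht1, ?_⟩, hnx⟩, rfl⟩
        by_contra h
        have h2 : j ≤ t := by omega
        have : i j ≤ i t := hle j t h2 (by omega)
        omega
      · rintro ⟨t, ⟨⟨ht1, ht2⟩, hnt⟩, rfl⟩
        have htj : i t < i j := hstrict t j (by omega) (by omega)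
        exact ⟨⟨t, ⟨ht1, by omega⟩, rfl⟩, hnt, by omega⟩
    rw [hset, Finset.card_image_of_injOn]
    intro a ha b hb hab
    simp only [Finset.coe_filter, Set.mem_setOf_eq, Finset.mem_Icc] at ha hb
    by_contra hne
    rcases Nat.lt_or_ge a b with h | h
    · have := hstrict a b h (by omega); omega
    · have := hstrict b a (by omega) (by omega); omega
  rw [Finset.filter_congr (fun n hn => by rw [hcard n hn])]
  rw [key j hj i h0 (fun a b hab hb => hstrict a b hab (by omega))]
  have hsub : ∀ k ∈ Finset.Icc 1 ((j + 1) / 2 - 1),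
      ((i (j - 2 * k) - i (j - 2 * k - 1) : ℕ) : ℤ)
        = (i (j - 2 * k) : ℤ) - (i (j - 2 * k - 1) : ℤ) := by
    intro k hk
    rw [Finset.mem_Icc] at hk
    have h2k : 1 ≤ j - 2 * k := by omega
    have := hstrict (j - 2 * k - 1) (j - 2 * k) (by omega) (by omega)
    omega
  have hlast := hstrict (j - 1) j (by omega) (by omega)
  push_cast
  rw [Finset.sum_congr rfl hsub]
  omega
end

section
/- Let ℓ ≥ 3 and let S = {i₁ < ⋯ < i_m} ⊆ {1,…,ℓ} with i_m ≤ ℓ−1 and m ≥ 1 (conventions i₀ = 0, i_{m+1} = ℓ+1). In the root system of type B_ℓ, with a positive root α = Σ n_i γ_i called compact iff Σ_{i∈S} n_i is even and relevant iff moreover Σ_{i∈S} n_i > 0, let δᶜ ∈ ℤ^ℓ be the coefficient vector of the sum of all relevant compact positive roots, and for 1 ≤ j ≤ m−1 set τ_{i_j} = −δᶜ_{i_j−1} + 2δᶜ_{i_j} − δᶜ_{i_j+1}. Then τ_{i_j} = −i_{j−1} + 2i_j − i_{j+1} + 2(S₁(j) − T₂(j)) + (−1)^{j+m}. -/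
open Finset

/-- count of indices `k ∈ [1,m]` with `a ≤ i k ≤ b`. -/
def s17cnt (m : ℕ) (i : ℕ → ℕ) (a b : ℕ) : ℕ :=
  ((Finset.Icc 1 m).filter (fun k => a ≤ i k ∧ i k ≤ b)).card

lemma s17mono (m : ℕ) (i : ℕ → ℕ) (hmono : ∀ k ≤ m, i k < i (k + 1)) :
    ∀ k l, k < l → l ≤ m + 1 → i k < i l := by
  intro k l hkl hl
  induction l with
  | zero => omega
  | succ l ih =>
    rcases Nat.lt_or_ge k l with h | h
    · exact lt_trans (ih h (by omega)) (hmono l (by omega))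
    · have : k = l := by omega
      subst this; exact hmono k (by omega)

lemma s17mono' (m : ℕ) (i : ℕ → ℕ) (hmono : ∀ k ≤ m, i k < i (k + 1)) :
    ∀ k l, k ≤ l → l ≤ m + 1 → i k ≤ i l := by
  intro k l hkl hl
  rcases Nat.lt_or_ge k l with h | h
  · exact le_of_lt (s17mono m i hmono k l h hl)
  · have : k = l := by omega
    subst this; exact le_rfl

lemma s17inter (m : ℕ) (i : ℕ → ℕ) (hmono : ∀ k ≤ m, i k < i (k + 1)) (a b : ℕ) :
    (((Finset.Icc 1 m).image i) ∩ Finset.Icc a b).card = s17cnt m i a b := by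
  have himg : ((Finset.Icc 1 m).image i) ∩ Finset.Icc a b
      = ((Finset.Icc 1 m).filter (fun k => a ≤ i k ∧ i k ≤ b)).image i := by
    ext x
    simp only [mem_inter, mem_image, mem_filter, mem_Icc]
    constructor
    · rintro ⟨⟨k, hk, rfl⟩, h2⟩
      exact ⟨k, ⟨hk, h2⟩, rfl⟩
    · rintro ⟨k, ⟨hk, h2⟩, rfl⟩
      exact ⟨⟨k, hk, rfl⟩, h2⟩
  rw [himg, s17cnt, Finset.card_image_of_injOn]
  intro x hx y hy hxy
  simp only [coe_filter, mem_Icc, Set.mem_setOf_eq] at hx hy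
  by_contra hne
  rcases Nat.lt_or_ge x y with h | h
  · exact absurd hxy (Nat.ne_of_lt (s17mono m i hmono x y h (by omega)))
  · have := s17mono m i hmono y x (by omega) (by omega); omega

/-- filter of indices between two consecutive "levels" is an interval. -/
lemma s17filter_Icc (m : ℕ) (i : ℕ → ℕ) (hmono : ∀ k ≤ m, i k < i (k + 1))
    (t s a b : ℕ) (ht1 : 1 ≤ t) (ht2 : t ≤ m + 1) (hs : s ≤ m)
    (hla : i (t - 1) < a) (hha : a ≤ i t) (hlb : i s ≤ b) (hhb : b < i (s + 1)) :
    (Finset.Icc 1 m).filter (fun k => a ≤ i k ∧ i k ≤ b) = Finset.Icc t s := by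
  ext k
  simp only [mem_filter, mem_Icc]
  constructor
  · rintro ⟨⟨hk1, hk2⟩, h1, h2⟩
    constructor
    · by_contra h
      have : i k ≤ i (t - 1) := s17mono' m i hmono k (t - 1) (by omega) (by omega)
      omega
    · by_contra h
      have : i (s + 1) ≤ i k := s17mono' m i hmono (s + 1) k (by omega) (by omega)
      omega
  · rintro ⟨h1, h2⟩
    have hk : 1 ≤ k ∧ k ≤ m := ⟨by omega, by omega⟩
    exact ⟨hk, le_trans hha (s17mono' m i hmono t k h1 (by omega)),
      le_trans (s17mono' m i hmono k s h2 (by omega)) hlb⟩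

lemma s17even (x y : ℕ) : Even (x + 2 * y) ↔ Even x := by
  rw [Nat.even_iff, Nat.even_iff]; omega

lemma s17sum_shift (f : ℕ → ℕ) : ∀ K, 1 ≤ K →
    ∑ k ∈ Finset.Icc 1 K, f k = f 1 + ∑ k ∈ Finset.Icc 1 (K - 1), f (k + 1) := by
  intro K
  induction K with
  | zero => omega
  | succ K ih =>
    intro _
    rcases Nat.eq_zero_or_pos K with rfl | hK
    · simp
    · rw [Finset.sum_Icc_succ_top (by omega : 1 ≤ K + 1), ih hK]
      have h1 : K + 1 - 1 = (K - 1) + 1 := by omega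
      rw [h1, Finset.sum_Icc_succ_top (by omega : 1 ≤ K - 1 + 1)]
      have h2 : K - 1 + 1 + 1 = K + 1 := by omega
      rw [h2, add_assoc]
/-- Main counting lemma. -/
lemma s17countL (ℓ m : ℕ) (i : ℕ → ℕ) (hmono : ∀ k ≤ m, i k < i (k + 1))
    (htop : i (m + 1) = ℓ + 1) :
    ∀ d t a, m + 1 ≤ t + d → 1 ≤ t → t ≤ m + 1 → i (t - 1) < a → a ≤ i t →
    ((Finset.Icc 1 ℓ).filter
        (fun b => a ≤ b ∧ Even (s17cnt m i a b) ∧ 0 < s17cnt m i a b)).card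
      = ∑ k ∈ Finset.Icc 1 ((m - t + 1) / 2), (i (t + 2 * k) - i (t + 2 * k - 1)) := by
  have hmono2 := s17mono m i hmono
  have hmono2' := s17mono' m i hmono
  intro d
  induction d with
  | zero =>
    intro t a hd h1 hm1 hla hha
    have ht : t = m + 1 := by omega
    subst ht
    have hempty : ∀ b, s17cnt m i a b = 0 := by
      intro b
      rw [s17cnt, Finset.card_eq_zero, Finset.filter_eq_empty_iff]
      intro k hk
      simp only [mem_Icc] at hk
      have : i k ≤ i (m + 1 - 1) := hmono2' k m (by omega) (by omega)
      simp only [not_and]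
      intro h
      omega
    have : (Finset.Icc 1 ℓ).filter
        (fun b => a ≤ b ∧ Even (s17cnt m i a b) ∧ 0 < s17cnt m i a b) = ∅ := by
      rw [Finset.filter_eq_empty_iff]
      intro b _
      rw [hempty b]
      simp
    rw [this]
    have : (m - (m + 1) + 1) / 2 = 0 := by omega
    rw [this]
    simp
  | succ d ih =>
    intro t a hd h1 hm1 hla hha
    rcases Nat.lt_or_ge t m with htm | htm
    · -- main case : t + 1 ≤ m
      set u := i (t + 1) with hu
      set v := i (t + 2) with hv
      set a' := u + 1 with ha'
      have htv : i t < u := hmono2 t (t + 1) (by omega) (by omega)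
      have huv : u < v := hmono2 (t + 1) (t + 2) (by omega) (by omega)
      have hvl : v ≤ ℓ + 1 := by
        rw [← htop]; exact hmono2' (t + 2) (m + 1) (by omega) (by omega)
      have hul : u ≤ ℓ := by
        have h1u : u ≤ i m := hmono2' (t+1) m (by omega) (by omega)
        have h2u : i m < i (m + 1) := hmono2 m (m+1) (by omega) (by omega)
        omega
      -- small b : cnt ≤ 1
      have hc_small : ∀ b, b < u → s17cnt m i a b ≤ 1 := by
        intro b hb
        rw [s17cnt]
        have : (Finset.Icc 1 m).filter (fun k => a ≤ i k ∧ i k ≤ b) ⊆ {t} := by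
          intro k hk
          simp only [mem_filter, mem_Icc] at hk
          simp only [mem_singleton]
          obtain ⟨⟨hk1, hk2⟩, hka, hkb⟩ := hk
          by_contra hne
          rcases Nat.lt_or_ge k t with h | h
          · have : i k ≤ i (t - 1) := hmono2' k (t-1) (by omega) (by omega)
            omega
          · have : u ≤ i k := hmono2' (t+1) k (by omega) (by omega)
            omega
        calc _ ≤ ({t} : Finset ℕ).card := Finset.card_le_card this
          _ = 1 := rfl
      -- split : cnt a b = cnt a' b + 2 for b ≥ u
      have hc_split : ∀ b, u ≤ b → s17cnt m i a b = s17cnt m i a' b + 2 := by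
        intro b hb
        rw [s17cnt, s17cnt]
        have hset : (Finset.Icc 1 m).filter (fun k => a ≤ i k ∧ i k ≤ b)
            = insert t (insert (t+1) ((Finset.Icc 1 m).filter (fun k => a' ≤ i k ∧ i k ≤ b))) := by
          ext k
          simp only [mem_filter, mem_Icc, mem_insert]
          constructor
          · rintro ⟨⟨hk1, hk2⟩, hka, hkb⟩
            rcases Nat.lt_or_ge k (t + 2) with h | h
            · rcases Nat.lt_or_ge k t with h2 | h2
              · have : i k ≤ i (t - 1) := hmono2' k (t-1) (by omega) (by omega)
                omega
              · omega
            · have : v ≤ i k := hmono2' (t+2) k (by omega) (by omega)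
              right; right
              exact ⟨⟨hk1, hk2⟩, by omega, hkb⟩
          · rintro (rfl | rfl | ⟨⟨hk1, hk2⟩, hka, hkb⟩)
            · exact ⟨⟨by omega, by omega⟩, hha, by omega⟩
            · refine ⟨⟨by omega, by omega⟩, by omega, hb⟩
            · exact ⟨⟨hk1, hk2⟩, by omega, hkb⟩
        rw [hset]
        have hn1 : t + 1 ∉ (Finset.Icc 1 m).filter (fun k => a' ≤ i k ∧ i k ≤ b) := by
          simp only [mem_filter, mem_Icc]; push_neg; intro _; intro h; omega
        have hn0 : t ∉ insert (t+1) ((Finset.Icc 1 m).filter (fun k => a' ≤ i k ∧ i k ≤ b)) := by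
          simp only [mem_insert, mem_filter, mem_Icc]
          push_neg
          exact ⟨by omega, fun _ h => by omega⟩
        rw [Finset.card_insert_of_notMem hn0, Finset.card_insert_of_notMem hn1]
      -- zero : cnt a' b = 0 for b < v
      have hc_zero : ∀ b, b < v → s17cnt m i a' b = 0 := by
        intro b hb
        rw [s17cnt, Finset.card_eq_zero, Finset.filter_eq_empty_iff]
        intro k hk
        simp only [mem_Icc] at hk
        simp only [not_and]
        intro h
        have : t + 2 ≤ k := by
          by_contra hc
          have : i k ≤ i (t + 1) := hmono2' k (t+1) (by omega) (by omega)
          omega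
        have : v ≤ i k := hmono2' (t+2) k this (by omega)
        omega
      -- pos : cnt a' b > 0 for v ≤ b ≤ ℓ
      have hc_pos : ∀ b, v ≤ b → b ≤ ℓ → 0 < s17cnt m i a' b := by
        intro b hb1 hb2
        have ht2 : t + 2 ≤ m := by
          by_contra hc
          have hveq : v = ℓ + 1 := by rw [hv, show t + 2 = m + 1 by omega, htop]
          omega
        rw [s17cnt, Finset.card_pos]
        exact ⟨t + 2, by simp only [mem_filter, mem_Icc]; exact ⟨⟨by omega, ht2⟩, by omega, by omega⟩⟩
      -- the filter splits
      have hdisj : Disjoint (Finset.Ico u v)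
          ((Finset.Icc 1 ℓ).filter (fun b => a' ≤ b ∧ Even (s17cnt m i a' b) ∧ 0 < s17cnt m i a' b)) := by
        rw [Finset.disjoint_left]
        intro b hb hb2
        simp only [mem_Ico] at hb
        simp only [mem_filter] at hb2
        have := hc_zero b hb.2
        omega
      have hsplit : (Finset.Icc 1 ℓ).filter
            (fun b => a ≤ b ∧ Even (s17cnt m i a b) ∧ 0 < s17cnt m i a b)
          = Finset.Ico u v ∪ (Finset.Icc 1 ℓ).filter
            (fun b => a' ≤ b ∧ Even (s17cnt m i a' b) ∧ 0 < s17cnt m i a' b) := by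
        ext b
        simp only [mem_union, mem_filter, mem_Ico, mem_Icc]
        constructor
        · rintro ⟨⟨hb1, hb2⟩, hab, hev, hpos⟩
          rcases Nat.lt_or_ge b u with hbu | hbu
          · exfalso
            have := hc_small b hbu
            rcases hev with ⟨r, hr⟩
            omega
          · have hsp := hc_split b hbu
            have hev' : Even (s17cnt m i a' b) := by
              rcases hev with ⟨r, hr⟩
              exact ⟨r - 1, by omega⟩
            rcases Nat.lt_or_ge b v with hbv | hbv
            · exact Or.inl ⟨hbu, hbv⟩
            · exact Or.inr ⟨⟨by omega, hb2⟩, by omega, hev', hc_pos b hbv hb2⟩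
        · rintro (⟨hb1, hb2⟩ | ⟨⟨hb1, hb2⟩, hab, hev, hpos⟩)
          · have hsp := hc_split b hb1
            have hz := hc_zero b hb2
            refine ⟨⟨by omega, by omega⟩, by omega, ?_, by omega⟩
            rw [hsp, hz]
            exact ⟨1, rfl⟩
          · have hsp := hc_split b (by omega)
            refine ⟨⟨hb1, hb2⟩, by omega, ?_, by omega⟩
            rw [hsp]
            rcases hev with ⟨r, hr⟩
            exact ⟨r + 1, by omega⟩
      rw [hsplit, Finset.card_union_of_disjoint hdisj, Nat.card_Ico]
      rw [ih (t + 2) a' (by omega) (by omega) (by omega)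
        (by rw [show t + 2 - 1 = t + 1 from rfl]; omega) (by rw [← hv]; omega)]
      -- sum identity
      have hK : 1 ≤ (m - t + 1) / 2 := by omega
      rw [s17sum_shift (fun k => i (t + 2 * k) - i (t + 2 * k - 1)) ((m - t + 1) / 2) hK]
      have hKK : (m - t + 1) / 2 - 1 = (m - (t + 2) + 1) / 2 := by omega
      rw [hKK]
      have : ∀ k ∈ Finset.Icc 1 ((m - (t+2) + 1) / 2),
          i (t + 2 * (k + 1)) - i (t + 2 * (k + 1) - 1)
            = i (t + 2 + 2 * k) - i (t + 2 + 2 * k - 1) := by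
        intro k _
        have e1 : t + 2 * (k + 1) = t + 2 + 2 * k := by omega
        rw [e1]
      rw [Finset.sum_congr rfl this]
      have h1' : i (t + 2 * 1) = v := by rw [hv]
      have h2' : i (t + 2 * 1 - 1) = u := by rw [hu]; norm_num
      rw [h1', h2']
    · -- t = m or t = m + 1 : both sides zero
      have hRHS : (m - t + 1) / 2 = 0 := by omega
      rw [hRHS]
      have hsmall : ∀ b, s17cnt m i a b ≤ 1 := by
        intro b
        rw [s17cnt]
        have : (Finset.Icc 1 m).filter (fun k => a ≤ i k ∧ i k ≤ b) ⊆ {m} := by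
          intro k hk
          simp only [mem_filter, mem_Icc] at hk
          simp only [mem_singleton]
          obtain ⟨⟨hk1, hk2⟩, hka, hkb⟩ := hk
          by_contra hne
          have : i k ≤ i (t - 1) := hmono2' k (t - 1) (by omega) (by omega)
          omega
        calc _ ≤ ({m} : Finset ℕ).card := Finset.card_le_card this
          _ = 1 := rfl
      have : (Finset.Icc 1 ℓ).filter
          (fun b => a ≤ b ∧ Even (s17cnt m i a b) ∧ 0 < s17cnt m i a b) = ∅ := by
        rw [Finset.filter_eq_empty_iff]
        intro b _
        have := hsmall b
        simp only [not_and]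
        intro _ hev
        rcases hev with ⟨r, hr⟩
        omega
      rw [this]
      simp
lemma s17comb (s : Finset (ℕ × ℕ)) (f g h : ℕ × ℕ → ℤ) :
    ∑ p ∈ s, (-f p + 2 * g p - h p)
      = -(∑ p ∈ s, f p) + 2 * (∑ p ∈ s, g p) - ∑ p ∈ s, h p := by
  rw [Finset.sum_sub_distrib, Finset.sum_add_distrib, Finset.mul_sum]
  simp

lemma s17pick1 {P : ℕ × ℕ → Prop} [DecidablePred P] (s t : Finset ℕ) (x : ℕ)
    (h : ∀ b ∈ t, P (x, b) → x ∈ s) :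
    (∑ p ∈ (s ×ˢ t).filter P, if p.1 = x then (1 : ℤ) else 0)
      = ((t.filter (fun b => P (x, b))).card : ℤ) := by
  rw [Finset.sum_filter, Finset.sum_product]
  have step : ∀ a ∈ s, (∑ b ∈ t, if P (a, b) then (if (a, b).1 = x then (1:ℤ) else 0) else 0)
      = if a = x then ((t.filter (fun b => P (x, b))).card : ℤ) else 0 := by
    intro a _
    by_cases ha : a = x
    · subst ha
      simp only [if_pos rfl]
      rw [Finset.sum_congr rfl (fun b _ => by
        by_cases hb : P (a, b) <;> simp [hb] : ∀ b ∈ t, _ = if P (a, b) then (1:ℤ) else 0)]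
      rw [Finset.sum_boole]
      simp
    · simp only [ha, if_false]
      apply Finset.sum_eq_zero
      intro b _
      simp [ha]
  rw [Finset.sum_congr rfl step]
  rw [Finset.sum_ite_eq' s x (fun _ => ((t.filter (fun b => P (x, b))).card : ℤ))]
  by_cases hx : x ∈ s
  · rw [if_pos hx]
  · rw [if_neg hx]
    have : (t.filter (fun b => P (x, b))) = ∅ := by
      rw [Finset.filter_eq_empty_iff]
      intro b hb hP
      exact hx (h b hb hP)
    rw [this]
    simp

lemma s17pick2 {P : ℕ × ℕ → Prop} [DecidablePred P] (s t : Finset ℕ) (x : ℕ)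
    (h : ∀ a ∈ s, P (a, x) → x ∈ t) :
    (∑ p ∈ (s ×ˢ t).filter P, if p.2 = x then (1 : ℤ) else 0)
      = ((s.filter (fun a => P (a, x))).card : ℤ) := by
  rw [Finset.sum_filter, Finset.sum_product]
  have step : ∀ a ∈ s, (∑ b ∈ t, if P (a, b) then (if (a, b).2 = x then (1:ℤ) else 0) else 0)
      = if x ∈ t then (if P (a, x) then (1:ℤ) else 0) else 0 := by
    intro a _
    have : ∀ b ∈ t, (if P (a, b) then (if (a, b).2 = x then (1:ℤ) else 0) else 0)
        = if b = x then (if P (a, b) then (1:ℤ) else 0) else 0 := by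
      intro b _
      by_cases hb : b = x <;> by_cases hP : P (a, b) <;> simp [hb, hP]
    rw [Finset.sum_congr rfl this]
    rw [Finset.sum_ite_eq' t x (fun b => if P (a, b) then (1:ℤ) else 0)]
  rw [Finset.sum_congr rfl step]
  by_cases hx : x ∈ t
  · simp only [if_pos hx]
    rw [Finset.sum_boole]
  · simp only [if_neg hx]
    have : (s.filter (fun a => P (a, x))) = ∅ := by
      rw [Finset.filter_eq_empty_iff]
      intro a ha hP
      exact hx (h a ha hP)
    rw [this]
    simp
lemma s17pick1' {P : ℕ × ℕ → Prop} [DecidablePred P] {Q : ℕ → Prop} [DecidablePred Q]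
    (s t : Finset ℕ) (x : ℕ) (h : ∀ b ∈ t, P (x, b) → x ∈ s)
    (hQ : ∀ b ∈ t, (P (x, b) ↔ Q b)) :
    (∑ p ∈ (s ×ˢ t).filter P, if p.1 = x then (1 : ℤ) else 0)
      = ((t.filter Q).card : ℤ) := by
  rw [s17pick1 s t x h]
  congr 1
  exact congrArg Finset.card (Finset.filter_congr hQ)

lemma s17pick2' {P : ℕ × ℕ → Prop} [DecidablePred P] {Q : ℕ → Prop} [DecidablePred Q]
    (s t : Finset ℕ) (x : ℕ) (h : ∀ a ∈ s, P (a, x) → x ∈ t)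
    (hQ : ∀ a ∈ s, (P (a, x) ↔ Q a)) :
    (∑ p ∈ (s ×ˢ t).filter P, if p.2 = x then (1 : ℤ) else 0)
      = ((s.filter Q).card : ℤ) := by
  rw [s17pick2 s t x h]
  congr 1
  exact congrArg Finset.card (Finset.filter_congr hQ)

/-- `n`-th coefficient of the sum of all relevant compact positive roots of type `B_ℓ`.
Positive roots are `Σ_{i=a}^{b} γ_i` (`1 ≤ a ≤ b ≤ ℓ`) and
`Σ_{i=a}^{b} γ_i + Σ_{i=b+1}^{ℓ} 2γ_i` (`1 ≤ a ≤ b ≤ ℓ−1`); a root `Σ nᵢγᵢ` is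
compact iff `Σ_{i∈S} nᵢ` is even, and relevant iff moreover `Σ_{i∈S} nᵢ > 0`. -/
def deltaB (ℓ : ℕ) (S : Finset ℕ) (n : ℕ) : ℤ :=
  (∑ p ∈ (Finset.Icc 1 ℓ ×ˢ Finset.Icc 1 ℓ).filter
      (fun p => p.1 ≤ p.2 ∧
        Even ((S ∩ Finset.Icc p.1 p.2).card) ∧
        0 < (S ∩ Finset.Icc p.1 p.2).card),
      (if p.1 ≤ n ∧ n ≤ p.2 then (1 : ℤ) else 0))
  + ∑ p ∈ (Finset.Icc 1 ℓ ×ˢ Finset.Icc 1 (ℓ - 1)).filter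
      (fun p => p.1 ≤ p.2 ∧
        Even ((S ∩ Finset.Icc p.1 p.2).card + 2 * (S ∩ Finset.Icc (p.2 + 1) ℓ).card) ∧
        0 < (S ∩ Finset.Icc p.1 p.2).card + 2 * (S ∩ Finset.Icc (p.2 + 1) ℓ).card),
      ((if p.1 ≤ n ∧ n ≤ p.2 then (1 : ℤ) else 0)
        + (if p.2 + 1 ≤ n ∧ n ≤ ℓ then (2 : ℤ) else 0))


set_option maxHeartbeats 3200000 in
/-- type `B_ℓ`, case `j ≠ m`:
`τ_{i_j} = −i_{j−1} + 2i_j − i_{j+1} + 2(S₁(j) − T₂(j)) + (−1)^{j+m}`. -/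
theorem stmt17 (ℓ m : ℕ) (hℓ : 3 ≤ ℓ) (hm : 1 ≤ m)
    (i : ℕ → ℕ) (h0 : i 0 = 0) (htop : i (m + 1) = ℓ + 1)
    (hmono : ∀ k ≤ m, i k < i (k + 1)) (him : i m ≤ ℓ - 1)
    (j : ℕ) (hj : 1 ≤ j) (hjm : j + 1 ≤ m) :
    -(deltaB ℓ ((Finset.Icc 1 m).image i) (i j - 1))
      + 2 * deltaB ℓ ((Finset.Icc 1 m).image i) (i j)
      - deltaB ℓ ((Finset.Icc 1 m).image i) (i j + 1)
      = -(i (j - 1) : ℤ) + 2 * (i j : ℤ) - (i (j + 1) : ℤ)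
        + 2 * ((∑ k ∈ Finset.Icc 1 ((m - j + 1) / 2),
            ((i (j + 2 * k) : ℤ) - (i (j + 2 * k - 1) : ℤ)))
          - (∑ k ∈ Finset.Icc 1 ((m - j) / 2),
            ((i (j + 2 * k + 1) : ℤ) - (i (j + 2 * k) : ℤ))))
        + (-1 : ℤ) ^ (j + m) := by
  have hmono2 := s17mono m i hmono
  have hmono2' := s17mono' m i hmono
  have h0j : i (j - 1) < i j := hmono2 (j - 1) j (by omega) (by omega)
  have h0j' : i 0 ≤ i (j - 1) := hmono2' 0 (j - 1) (by omega) (by omega)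
  have hn1 : 1 ≤ i j := by omega
  have hjj1 : i j < i (j + 1) := hmono2 j (j + 1) (by omega) (by omega)
  have hj1m : i (j + 1) ≤ i m := hmono2' (j + 1) m (by omega) (by omega)
  have hml : i m ≤ ℓ - 1 := him
  have hn2 : i j + 2 ≤ ℓ := by omega
  have hwit : ∀ x b, x ≤ i j → i j ≤ b → 0 < s17cnt m i x b := by
    intro x b h1 h2
    rw [s17cnt, Finset.card_pos]
    exact ⟨j, Finset.mem_filter.mpr ⟨Finset.mem_Icc.mpr ⟨hj, by omega⟩, h1, h2⟩⟩
  simp only [deltaB]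
  rw [show ∀ x1 x2 y1 y2 z1 z2 : ℤ, -(x1 + x2) + 2 * (y1 + y2) - (z1 + z2)
      = (-x1 + 2 * y1 - z1) + (-x2 + 2 * y2 - z2) from fun _ _ _ _ _ _ => by ring]
  rw [← s17comb, ← s17comb]
  -- pointwise rewriting of the two integrands
  have hg1 : ∀ p ∈ (Finset.Icc 1 ℓ ×ˢ Finset.Icc 1 ℓ).filter
      (fun p => p.1 ≤ p.2 ∧
        Even ((((Finset.Icc 1 m).image i) ∩ Finset.Icc p.1 p.2).card) ∧
        0 < (((Finset.Icc 1 m).image i) ∩ Finset.Icc p.1 p.2).card),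
      (-(if p.1 ≤ i j - 1 ∧ i j - 1 ≤ p.2 then (1:ℤ) else 0)
        + 2 * (if p.1 ≤ i j ∧ i j ≤ p.2 then (1:ℤ) else 0)
        - (if p.1 ≤ i j + 1 ∧ i j + 1 ≤ p.2 then (1:ℤ) else 0))
      = ((if p.1 = i j then (1:ℤ) else 0) + (if p.2 = i j then (1:ℤ) else 0)
        - (if p.2 = i j - 1 then (1:ℤ) else 0) - (if p.1 = i j + 1 then (1:ℤ) else 0)) := by
    intro p hp
    obtain ⟨hmem, hab, -⟩ := Finset.mem_filter.mp hp
    obtain ⟨h1, h2⟩ := Finset.mem_product.mp hmem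
    rw [Finset.mem_Icc] at h1 h2
    split_ifs <;> omega
  have hg2 : ∀ p ∈ (Finset.Icc 1 ℓ ×ˢ Finset.Icc 1 (ℓ - 1)).filter
      (fun p => p.1 ≤ p.2 ∧
        Even ((((Finset.Icc 1 m).image i) ∩ Finset.Icc p.1 p.2).card
          + 2 * (((Finset.Icc 1 m).image i) ∩ Finset.Icc (p.2 + 1) ℓ).card) ∧
        0 < (((Finset.Icc 1 m).image i) ∩ Finset.Icc p.1 p.2).card
          + 2 * (((Finset.Icc 1 m).image i) ∩ Finset.Icc (p.2 + 1) ℓ).card),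
      (-((if p.1 ≤ i j - 1 ∧ i j - 1 ≤ p.2 then (1:ℤ) else 0)
          + (if p.2 + 1 ≤ i j - 1 ∧ i j - 1 ≤ ℓ then (2:ℤ) else 0))
        + 2 * ((if p.1 ≤ i j ∧ i j ≤ p.2 then (1:ℤ) else 0)
          + (if p.2 + 1 ≤ i j ∧ i j ≤ ℓ then (2:ℤ) else 0))
        - ((if p.1 ≤ i j + 1 ∧ i j + 1 ≤ p.2 then (1:ℤ) else 0)
          + (if p.2 + 1 ≤ i j + 1 ∧ i j + 1 ≤ ℓ then (2:ℤ) else 0)))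
      = ((if p.1 = i j then (1:ℤ) else 0) - (if p.1 = i j + 1 then (1:ℤ) else 0)
        + (if p.2 = i j - 1 then (1:ℤ) else 0) - (if p.2 = i j then (1:ℤ) else 0)) := by
    intro p hp
    obtain ⟨hmem, hab, -⟩ := Finset.mem_filter.mp hp
    obtain ⟨h1, h2⟩ := Finset.mem_product.mp hmem
    rw [Finset.mem_Icc] at h1 h2
    split_ifs <;> omega
  rw [Finset.sum_congr rfl hg1, Finset.sum_congr rfl hg2]
  simp only [Finset.sum_sub_distrib, Finset.sum_add_distrib]
  have pA1n : (∑ p ∈ (Finset.Icc 1 ℓ ×ˢ Finset.Icc 1 ℓ).filter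
      (fun p => p.1 ≤ p.2 ∧ Even ((((Finset.Icc 1 m).image i) ∩ Finset.Icc p.1 p.2).card) ∧
        0 < (((Finset.Icc 1 m).image i) ∩ Finset.Icc p.1 p.2).card),
      if p.1 = i j then (1:ℤ) else 0)
      = (((Finset.Icc 1 ℓ).filter (fun b => i j ≤ b ∧ Even (s17cnt m i (i j) b) ∧
          0 < s17cnt m i (i j) b)).card : ℤ) := by
    apply s17pick1'
    · intro b hb hP
      exact Finset.mem_Icc.mpr ⟨hn1, by omega⟩
    · intro b hb
      simp only [s17inter m i hmono]
  have pA1n1 : (∑ p ∈ (Finset.Icc 1 ℓ ×ˢ Finset.Icc 1 ℓ).filter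
      (fun p => p.1 ≤ p.2 ∧ Even ((((Finset.Icc 1 m).image i) ∩ Finset.Icc p.1 p.2).card) ∧
        0 < (((Finset.Icc 1 m).image i) ∩ Finset.Icc p.1 p.2).card),
      if p.1 = i j + 1 then (1:ℤ) else 0)
      = (((Finset.Icc 1 ℓ).filter (fun b => i j + 1 ≤ b ∧ Even (s17cnt m i (i j + 1) b) ∧
          0 < s17cnt m i (i j + 1) b)).card : ℤ) := by
    apply s17pick1'
    · intro b hb hP
      exact Finset.mem_Icc.mpr ⟨by omega, by omega⟩
    · intro b hb
      simp only [s17inter m i hmono]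
  have pB1n : (∑ p ∈ (Finset.Icc 1 ℓ ×ˢ Finset.Icc 1 ℓ).filter
      (fun p => p.1 ≤ p.2 ∧ Even ((((Finset.Icc 1 m).image i) ∩ Finset.Icc p.1 p.2).card) ∧
        0 < (((Finset.Icc 1 m).image i) ∩ Finset.Icc p.1 p.2).card),
      if p.2 = i j then (1:ℤ) else 0)
      = (((Finset.Icc 1 ℓ).filter (fun a => a ≤ i j ∧ Even (s17cnt m i a (i j)) ∧
          0 < s17cnt m i a (i j))).card : ℤ) := by
    apply s17pick2'
    · intro a ha hP
      exact Finset.mem_Icc.mpr ⟨hn1, by omega⟩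
    · intro a ha
      simp only [s17inter m i hmono]
  have pB1w : (∑ p ∈ (Finset.Icc 1 ℓ ×ˢ Finset.Icc 1 ℓ).filter
      (fun p => p.1 ≤ p.2 ∧ Even ((((Finset.Icc 1 m).image i) ∩ Finset.Icc p.1 p.2).card) ∧
        0 < (((Finset.Icc 1 m).image i) ∩ Finset.Icc p.1 p.2).card),
      if p.2 = i j - 1 then (1:ℤ) else 0)
      = (((Finset.Icc 1 ℓ).filter (fun a => a ≤ i j - 1 ∧ Even (s17cnt m i a (i j - 1)) ∧
          0 < s17cnt m i a (i j - 1))).card : ℤ) := by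
    apply s17pick2'
    · intro a ha hP
      have h1 : a ≤ i j - 1 := hP.1
      rw [Finset.mem_Icc] at ha
      exact Finset.mem_Icc.mpr ⟨by omega, by omega⟩
    · intro a ha
      simp only [s17inter m i hmono]
  have qA2n : (∑ p ∈ (Finset.Icc 1 ℓ ×ˢ Finset.Icc 1 (ℓ - 1)).filter
      (fun p => p.1 ≤ p.2 ∧
        Even ((((Finset.Icc 1 m).image i) ∩ Finset.Icc p.1 p.2).card
          + 2 * (((Finset.Icc 1 m).image i) ∩ Finset.Icc (p.2 + 1) ℓ).card) ∧
        0 < (((Finset.Icc 1 m).image i) ∩ Finset.Icc p.1 p.2).card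
          + 2 * (((Finset.Icc 1 m).image i) ∩ Finset.Icc (p.2 + 1) ℓ).card),
      if p.1 = i j then (1:ℤ) else 0)
      = (((Finset.Icc 1 (ℓ - 1)).filter (fun b => i j ≤ b ∧
          Even (s17cnt m i (i j) b + 2 * s17cnt m i (b + 1) ℓ) ∧
          0 < s17cnt m i (i j) b + 2 * s17cnt m i (b + 1) ℓ)).card : ℤ) := by
    apply s17pick1'
    · intro b hb hP
      exact Finset.mem_Icc.mpr ⟨hn1, by omega⟩
    · intro b hb
      simp only [s17inter m i hmono]
  have qA2n1 : (∑ p ∈ (Finset.Icc 1 ℓ ×ˢ Finset.Icc 1 (ℓ - 1)).filter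
      (fun p => p.1 ≤ p.2 ∧
        Even ((((Finset.Icc 1 m).image i) ∩ Finset.Icc p.1 p.2).card
          + 2 * (((Finset.Icc 1 m).image i) ∩ Finset.Icc (p.2 + 1) ℓ).card) ∧
        0 < (((Finset.Icc 1 m).image i) ∩ Finset.Icc p.1 p.2).card
          + 2 * (((Finset.Icc 1 m).image i) ∩ Finset.Icc (p.2 + 1) ℓ).card),
      if p.1 = i j + 1 then (1:ℤ) else 0)
      = (((Finset.Icc 1 (ℓ - 1)).filter (fun b => i j + 1 ≤ b ∧
          Even (s17cnt m i (i j + 1) b + 2 * s17cnt m i (b + 1) ℓ) ∧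
          0 < s17cnt m i (i j + 1) b + 2 * s17cnt m i (b + 1) ℓ)).card : ℤ) := by
    apply s17pick1'
    · intro b hb hP
      exact Finset.mem_Icc.mpr ⟨by omega, by omega⟩
    · intro b hb
      simp only [s17inter m i hmono]
  have qB2n : (∑ p ∈ (Finset.Icc 1 ℓ ×ˢ Finset.Icc 1 (ℓ - 1)).filter
      (fun p => p.1 ≤ p.2 ∧
        Even ((((Finset.Icc 1 m).image i) ∩ Finset.Icc p.1 p.2).card
          + 2 * (((Finset.Icc 1 m).image i) ∩ Finset.Icc (p.2 + 1) ℓ).card) ∧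
        0 < (((Finset.Icc 1 m).image i) ∩ Finset.Icc p.1 p.2).card
          + 2 * (((Finset.Icc 1 m).image i) ∩ Finset.Icc (p.2 + 1) ℓ).card),
      if p.2 = i j then (1:ℤ) else 0)
      = (((Finset.Icc 1 ℓ).filter (fun a => a ≤ i j ∧
          Even (s17cnt m i a (i j) + 2 * s17cnt m i (i j + 1) ℓ) ∧
          0 < s17cnt m i a (i j) + 2 * s17cnt m i (i j + 1) ℓ)).card : ℤ) := by
    apply s17pick2'
    · intro a ha hP
      exact Finset.mem_Icc.mpr ⟨hn1, by omega⟩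
    · intro a ha
      simp only [s17inter m i hmono]
  have qB2w : (∑ p ∈ (Finset.Icc 1 ℓ ×ˢ Finset.Icc 1 (ℓ - 1)).filter
      (fun p => p.1 ≤ p.2 ∧
        Even ((((Finset.Icc 1 m).image i) ∩ Finset.Icc p.1 p.2).card
          + 2 * (((Finset.Icc 1 m).image i) ∩ Finset.Icc (p.2 + 1) ℓ).card) ∧
        0 < (((Finset.Icc 1 m).image i) ∩ Finset.Icc p.1 p.2).card
          + 2 * (((Finset.Icc 1 m).image i) ∩ Finset.Icc (p.2 + 1) ℓ).card),
      if p.2 = i j - 1 then (1:ℤ) else 0)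
      = (((Finset.Icc 1 ℓ).filter (fun a => a ≤ i j - 1 ∧
          Even (s17cnt m i a (i j - 1) + 2 * s17cnt m i (i j - 1 + 1) ℓ) ∧
          0 < s17cnt m i a (i j - 1) + 2 * s17cnt m i (i j - 1 + 1) ℓ)).card : ℤ) := by
    apply s17pick2'
    · intro a ha hP
      have h1 : a ≤ i j - 1 := hP.1
      rw [Finset.mem_Icc] at ha
      exact Finset.mem_Icc.mpr ⟨by omega, by omega⟩
    · intro a ha
      simp only [s17inter m i hmono]
  rw [pA1n, pA1n1, pB1n, pB1w, qA2n, qA2n1, qB2n, qB2w]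
  -- counting results
  have hA1n : (Finset.filter (fun b => i j ≤ b ∧ Even (s17cnt m i (i j) b) ∧ 0 < s17cnt m i (i j) b) (Finset.Icc 1 ℓ)).card
      = ∑ k ∈ Finset.Icc 1 ((m - j + 1) / 2), (i (j + 2 * k) - i (j + 2 * k - 1)) :=
    s17countL ℓ m i hmono htop (m + 1) j (i j) (by omega) hj (by omega) h0j le_rfl
  have hA1n1 : (Finset.filter (fun b => i j + 1 ≤ b ∧ Even (s17cnt m i (i j + 1) b) ∧ 0 < s17cnt m i (i j + 1) b) (Finset.Icc 1 ℓ)).card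
      = ∑ k ∈ Finset.Icc 1 ((m - (j + 1) + 1) / 2), (i (j + 1 + 2 * k) - i (j + 1 + 2 * k - 1)) :=
    s17countL ℓ m i hmono htop (m + 1) (j + 1) (i j + 1) (by omega) (by omega) (by omega)
      (by rw [show j + 1 - 1 = j from rfl]; omega) (by omega)
  have hA1n1' : (Finset.filter (fun b => i j + 1 ≤ b ∧ Even (s17cnt m i (i j + 1) b) ∧ 0 < s17cnt m i (i j + 1) b) (Finset.Icc 1 ℓ)).card
      = ∑ k ∈ Finset.Icc 1 ((m - j) / 2), (i (j + 2 * k + 1) - i (j + 2 * k)) := by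
    rw [hA1n1, show (m - (j + 1) + 1) / 2 = (m - j) / 2 from by omega]
    apply Finset.sum_congr rfl
    intro k hk
    rw [show j + 1 + 2 * k - 1 = j + 2 * k from by omega,
      show j + 1 + 2 * k = j + 2 * k + 1 from by omega]
  have hcnl : s17cnt m i (i j) ℓ = m + 1 - j := by
    rw [s17cnt, s17filter_Icc m i hmono j m (i j) ℓ hj (by omega) (by omega) h0j le_rfl
      (by omega) (by rw [htop]; omega), Nat.card_Icc]
  have hcnl1 : s17cnt m i (i j + 1) ℓ = m - j := by
    rw [s17cnt, s17filter_Icc m i hmono (j + 1) m (i j + 1) ℓ (by omega) (by omega) (by omega)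
      (by rw [show j + 1 - 1 = j from rfl]; omega) (by omega) (by omega) (by rw [htop]; omega),
      Nat.card_Icc]
    omega
  have hIccsplit : Finset.Icc 1 ℓ = insert ℓ (Finset.Icc 1 (ℓ - 1)) := by
    ext x; simp only [Finset.mem_Icc, Finset.mem_insert]; omega
  have hlnot : ℓ ∉ Finset.Icc 1 (ℓ - 1) := by simp only [Finset.mem_Icc]; omega
  have hsub1 : (Finset.filter (fun b => i j ≤ b ∧ Even (s17cnt m i (i j) b) ∧ 0 < s17cnt m i (i j) b) (Finset.Icc 1 ℓ)).card
      = (Finset.filter (fun b => i j ≤ b ∧ Even (s17cnt m i (i j) b) ∧ 0 < s17cnt m i (i j) b) (Finset.Icc 1 (ℓ - 1))).card + (if Even (m + 1 - j) then 1 else 0) := by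
    rw [hIccsplit, Finset.filter_insert]
    by_cases hev : Even (m + 1 - j)
    · rw [if_pos ⟨by omega, by rw [hcnl]; exact hev, by rw [hcnl]; omega⟩, if_pos hev,
        Finset.card_insert_of_notMem (fun hmem => hlnot (Finset.mem_of_mem_filter ℓ hmem))]
    · rw [if_neg (fun hQ => hev (by rw [← hcnl]; exact hQ.2.1)), if_neg hev]
      omega
  have hsub2 : (Finset.filter (fun b => i j + 1 ≤ b ∧ Even (s17cnt m i (i j + 1) b) ∧ 0 < s17cnt m i (i j + 1) b) (Finset.Icc 1 ℓ)).card
      = (Finset.filter (fun b => i j + 1 ≤ b ∧ Even (s17cnt m i (i j + 1) b) ∧ 0 < s17cnt m i (i j + 1) b) (Finset.Icc 1 (ℓ - 1))).card + (if Even (m - j) then 1 else 0) := by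
    rw [hIccsplit, Finset.filter_insert]
    by_cases hev : Even (m - j)
    · rw [if_pos ⟨by omega, by rw [hcnl1]; exact hev, by rw [hcnl1]; omega⟩, if_pos hev,
        Finset.card_insert_of_notMem (fun hmem => hlnot (Finset.mem_of_mem_filter ℓ hmem))]
    · rw [if_neg (fun hQ => hev (by rw [← hcnl1]; exact hQ.2.1)), if_neg hev]
      omega
  have hA2ncard : (Finset.filter (fun b => i j ≤ b ∧ Even (s17cnt m i (i j) b + 2 * s17cnt m i (b + 1) ℓ) ∧ 0 < s17cnt m i (i j) b + 2 * s17cnt m i (b + 1) ℓ) (Finset.Icc 1 (ℓ - 1))).card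
      = (Finset.filter (fun b => i j ≤ b ∧ Even (s17cnt m i (i j) b) ∧ 0 < s17cnt m i (i j) b) (Finset.Icc 1 (ℓ - 1))).card := by
    apply congrArg Finset.card
    apply Finset.filter_congr
    intro b hb
    constructor
    · rintro ⟨h1, h2, h3⟩
      exact ⟨h1, (s17even _ _).mp h2, hwit _ _ le_rfl h1⟩
    · rintro ⟨h1, h2, h3⟩
      exact ⟨h1, (s17even _ _).mpr h2, by omega⟩
  have hB2ncard : (Finset.filter (fun a => a ≤ i j ∧ Even (s17cnt m i a (i j) + 2 * s17cnt m i (i j + 1) ℓ) ∧ 0 < s17cnt m i a (i j) + 2 * s17cnt m i (i j + 1) ℓ) (Finset.Icc 1 ℓ)).card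
      = (Finset.filter (fun a => a ≤ i j ∧ Even (s17cnt m i a (i j)) ∧ 0 < s17cnt m i a (i j)) (Finset.Icc 1 ℓ)).card := by
    apply congrArg Finset.card
    apply Finset.filter_congr
    intro a ha
    constructor
    · rintro ⟨h1, h2, h3⟩
      exact ⟨h1, (s17even _ _).mp h2, hwit _ _ h1 le_rfl⟩
    · rintro ⟨h1, h2, h3⟩
      exact ⟨h1, (s17even _ _).mpr h2, by omega⟩
  have hzero1 : ∀ b, b < i (j + 1) → s17cnt m i (i j + 1) b = 0 := by
    intro b hb
    rw [s17cnt, Finset.card_eq_zero, Finset.filter_eq_empty_iff]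
    intro k hk
    rw [Finset.mem_Icc] at hk
    simp only [not_and]
    intro hik
    have hkj : j + 1 ≤ k := by
      by_contra hc
      have : i k ≤ i j := hmono2' k j (by omega) (by omega)
      omega
    have : i (j + 1) ≤ i k := hmono2' (j + 1) k hkj (by omega)
    omega
  have hposm : ∀ b, b + 1 ≤ i m → 0 < s17cnt m i (b + 1) ℓ := by
    intro b hb
    rw [s17cnt, Finset.card_pos]
    exact ⟨m, Finset.mem_filter.mpr ⟨Finset.mem_Icc.mpr ⟨by omega, le_rfl⟩, hb, by omega⟩⟩
  have hpos1 : ∀ b, i (j + 1) ≤ b → b ≤ ℓ → 0 < s17cnt m i (i j + 1) b := by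
    intro b h1 h2
    rw [s17cnt, Finset.card_pos]
    exact ⟨j + 1, Finset.mem_filter.mpr ⟨Finset.mem_Icc.mpr ⟨by omega, by omega⟩, by omega, by omega⟩⟩
  have hA2n1card : (Finset.filter (fun b => i j + 1 ≤ b ∧ Even (s17cnt m i (i j + 1) b + 2 * s17cnt m i (b + 1) ℓ) ∧ 0 < s17cnt m i (i j + 1) b + 2 * s17cnt m i (b + 1) ℓ) (Finset.Icc 1 (ℓ - 1))).card
      = (Finset.filter (fun b => i j + 1 ≤ b ∧ Even (s17cnt m i (i j + 1) b) ∧ 0 < s17cnt m i (i j + 1) b) (Finset.Icc 1 (ℓ - 1))).card + (i (j + 1) - (i j + 1)) := by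
    have hsplit2 : Finset.filter (fun b => i j + 1 ≤ b ∧ Even (s17cnt m i (i j + 1) b + 2 * s17cnt m i (b + 1) ℓ) ∧ 0 < s17cnt m i (i j + 1) b + 2 * s17cnt m i (b + 1) ℓ) (Finset.Icc 1 (ℓ - 1))
        = Finset.filter (fun b => i j + 1 ≤ b ∧ Even (s17cnt m i (i j + 1) b) ∧ 0 < s17cnt m i (i j + 1) b) (Finset.Icc 1 (ℓ - 1)) ∪ Finset.Ico (i j + 1) (i (j + 1)) := by
      ext b
      simp only [Finset.mem_filter, Finset.mem_union, Finset.mem_Ico, Finset.mem_Icc]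
      constructor
      · rintro ⟨⟨hb1, hb2⟩, hab, hev, hpos⟩
        rcases Nat.lt_or_ge b (i (j + 1)) with h | h
        · exact Or.inr ⟨hab, h⟩
        · exact Or.inl ⟨⟨hb1, hb2⟩, hab, (s17even _ _).mp hev, hpos1 b h (by omega)⟩
      · rintro (⟨⟨hb1, hb2⟩, hab, hev, hpos⟩ | ⟨hab, hb⟩)
        · exact ⟨⟨hb1, hb2⟩, hab, (s17even _ _).mpr hev, by omega⟩
        · refine ⟨⟨by omega, by omega⟩, hab, ?_, ?_⟩
          · rw [hzero1 b hb]
            exact (s17even 0 _).mpr Even.zero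
          · have h1 := hzero1 b hb
            have h2 := hposm b (by omega)
            omega
    have hdisj2 : Disjoint (Finset.filter (fun b => i j + 1 ≤ b ∧ Even (s17cnt m i (i j + 1) b) ∧ 0 < s17cnt m i (i j + 1) b) (Finset.Icc 1 (ℓ - 1))) (Finset.Ico (i j + 1) (i (j + 1))) := by
      rw [Finset.disjoint_left]
      intro b hb hb2
      rw [Finset.mem_filter] at hb
      rw [Finset.mem_Ico] at hb2
      have := hzero1 b hb2.2
      omega
    rw [hsplit2, Finset.card_union_of_disjoint hdisj2, Nat.card_Ico]
  have hzero0 : ∀ a, i (j - 1) < a → s17cnt m i a (i j - 1) = 0 := by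
    intro a ha
    rw [s17cnt, Finset.card_eq_zero, Finset.filter_eq_empty_iff]
    intro k hk
    rw [Finset.mem_Icc] at hk
    simp only [not_and]
    intro hak
    have hkj : j ≤ k := by
      by_contra hc
      have : i k ≤ i (j - 1) := hmono2' k (j - 1) (by omega) (by omega)
      omega
    have : i j ≤ i k := hmono2' j k hkj (by omega)
    omega
  have hposw : 0 < s17cnt m i (i j - 1 + 1) ℓ := by
    rw [show i j - 1 + 1 = i j from by omega]
    exact hwit (i j) ℓ le_rfl (by omega)
  have hB2wcard : (Finset.filter (fun a => a ≤ i j - 1 ∧ Even (s17cnt m i a (i j - 1) + 2 * s17cnt m i (i j - 1 + 1) ℓ) ∧ 0 < s17cnt m i a (i j - 1) + 2 * s17cnt m i (i j - 1 + 1) ℓ) (Finset.Icc 1 ℓ)).card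
      = (Finset.filter (fun a => a ≤ i j - 1 ∧ Even (s17cnt m i a (i j - 1)) ∧ 0 < s17cnt m i a (i j - 1)) (Finset.Icc 1 ℓ)).card + (i j - 1 + 1 - (i (j - 1) + 1)) := by
    have hsplitw : Finset.filter (fun a => a ≤ i j - 1 ∧ Even (s17cnt m i a (i j - 1) + 2 * s17cnt m i (i j - 1 + 1) ℓ) ∧ 0 < s17cnt m i a (i j - 1) + 2 * s17cnt m i (i j - 1 + 1) ℓ) (Finset.Icc 1 ℓ)
        = Finset.filter (fun a => a ≤ i j - 1 ∧ Even (s17cnt m i a (i j - 1)) ∧ 0 < s17cnt m i a (i j - 1)) (Finset.Icc 1 ℓ) ∪ Finset.Icc (i (j - 1) + 1) (i j - 1) := by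
      ext a
      simp only [Finset.mem_filter, Finset.mem_union, Finset.mem_Icc]
      constructor
      · rintro ⟨⟨ha1, ha2⟩, haw, hev, hpos⟩
        rcases Nat.lt_or_ge (i (j - 1)) a with h | h
        · exact Or.inr ⟨by omega, haw⟩
        · left
          have hj2 : 2 ≤ j := by
            by_contra hc
            have hj1 : j = 1 := by omega
            rw [hj1, show (1:ℕ) - 1 = 0 from rfl, h0] at h
            omega
          have hpos0 : 0 < s17cnt m i a (i j - 1) := by
            rw [s17cnt, Finset.card_pos]
            exact ⟨j - 1, Finset.mem_filter.mpr ⟨Finset.mem_Icc.mpr ⟨by omega, by omega⟩, h, by omega⟩⟩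
          exact ⟨⟨ha1, ha2⟩, haw, (s17even _ _).mp hev, hpos0⟩
      · rintro (⟨⟨ha1, ha2⟩, haw, hev, hpos⟩ | ⟨ha1, ha2⟩)
        · exact ⟨⟨ha1, ha2⟩, haw, (s17even _ _).mpr hev, by omega⟩
        · refine ⟨⟨by omega, by omega⟩, by omega, ?_, ?_⟩
          · rw [hzero0 a (by omega)]
            exact (s17even 0 _).mpr Even.zero
          · have h1 := hzero0 a (by omega)
            omega
    have hdisjw : Disjoint (Finset.filter (fun a => a ≤ i j - 1 ∧ Even (s17cnt m i a (i j - 1)) ∧ 0 < s17cnt m i a (i j - 1)) (Finset.Icc 1 ℓ)) (Finset.Icc (i (j - 1) + 1) (i j - 1)) := by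
      rw [Finset.disjoint_left]
      intro a ha hb
      rw [Finset.mem_filter] at ha
      rw [Finset.mem_Icc] at hb
      have := hzero0 a (by omega)
      omega
    rw [hsplitw, Finset.card_union_of_disjoint hdisjw, Nat.card_Icc]
  -- cast bookkeeping
  have hc1 : (∑ x ∈ Finset.Icc 1 ((m - j + 1) / 2), (i (j + 2 * x) : ℤ))
      = ((∑ x ∈ Finset.Icc 1 ((m - j + 1) / 2), i (j + 2 * x) : ℕ) : ℤ) := (Nat.cast_sum _ _).symm
  have hc2 : (∑ x ∈ Finset.Icc 1 ((m - j + 1) / 2), (i (j + 2 * x - 1) : ℤ))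
      = ((∑ x ∈ Finset.Icc 1 ((m - j + 1) / 2), i (j + 2 * x - 1) : ℕ) : ℤ) := (Nat.cast_sum _ _).symm
  have hc3 : (∑ x ∈ Finset.Icc 1 ((m - j) / 2), (i (j + 2 * x + 1) : ℤ))
      = ((∑ x ∈ Finset.Icc 1 ((m - j) / 2), i (j + 2 * x + 1) : ℕ) : ℤ) := (Nat.cast_sum _ _).symm
  have hc4 : (∑ x ∈ Finset.Icc 1 ((m - j) / 2), (i (j + 2 * x) : ℤ))
      = ((∑ x ∈ Finset.Icc 1 ((m - j) / 2), i (j + 2 * x) : ℕ) : ℤ) := (Nat.cast_sum _ _).symm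
  have hmergeS : (∑ k ∈ Finset.Icc 1 ((m - j + 1) / 2), (i (j + 2 * k) - i (j + 2 * k - 1)))
      + (∑ x ∈ Finset.Icc 1 ((m - j + 1) / 2), i (j + 2 * x - 1))
      = ∑ x ∈ Finset.Icc 1 ((m - j + 1) / 2), i (j + 2 * x) := by
    rw [← Finset.sum_add_distrib]
    apply Finset.sum_congr rfl
    intro k hk
    rw [Finset.mem_Icc] at hk
    have := hmono2' (j + 2 * k - 1) (j + 2 * k) (by omega) (by omega)
    omega
  have hmergeT : (∑ k ∈ Finset.Icc 1 ((m - j) / 2), (i (j + 2 * k + 1) - i (j + 2 * k)))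
      + (∑ x ∈ Finset.Icc 1 ((m - j) / 2), i (j + 2 * x))
      = ∑ x ∈ Finset.Icc 1 ((m - j) / 2), i (j + 2 * x + 1) := by
    rw [← Finset.sum_add_distrib]
    apply Finset.sum_congr rfl
    intro k hk
    rw [Finset.mem_Icc] at hk
    have := hmono2' (j + 2 * k) (j + 2 * k + 1) (by omega) (by omega)
    omega
  rcases Nat.even_or_odd (j + m) with he | he
  · rw [Even.neg_one_pow he]
    rw [Nat.even_iff] at he
    rw [if_neg (by rw [Nat.even_iff]; omega : ¬ Even (m + 1 - j))] at hsub1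
    rw [if_pos (by rw [Nat.even_iff]; omega : Even (m - j))] at hsub2
    omega
  · rw [Odd.neg_one_pow he]
    rw [Nat.odd_iff] at he
    rw [if_pos (by rw [Nat.even_iff]; omega : Even (m + 1 - j))] at hsub1
    rw [if_neg (by rw [Nat.even_iff]; omega : ¬ Even (m - j))] at hsub2
    omega
end

section
/- Let ℓ ≥ 4 and let S = {i₁ < ⋯ < i_m} ⊆ {1,…,ℓ} with {ℓ−1, ℓ} ⊆ S and i_{m−2} ≤ ℓ−3 if m ≥ 3 (convention i₀ = 0; here i_m = ℓ, i_{m−1} = ℓ−1, and i_{m−2} denotes the largest element of S below ℓ−1, or 0 if none). In the root system of type D_ℓ (positive roots as interval sums Σ_{i=a}^{b} γ_i with b ≤ ℓ−2, tails Σ_{i=a}^{ℓ−2} γ_i + γ_ν for ν ∈ {ℓ−1,ℓ}, Σ_{i=a}^{ℓ−2} γ_i + γ_{ℓ−1} + γ_ℓ, doubled roots Σ_{i=a}^{b} γ_i + Σ_{i=b+1}^{ℓ−2} 2γ_i + γ_{ℓ−1} + γ_ℓ with b ≤ ℓ−3, and the simple roots γ_{ℓ−1}, γ_ℓ), with α =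 Σ n_i γ_i compact iff Σ_{i∈S} n_i is even and relevant iff moreover Σ_{i∈S} n_i > 0, let δᶜ ∈ ℤ^ℓ be the coefficient vector of the sum of all relevant compact positive roots. Then −δᶜ_{ℓ−2} + 2δᶜ_{ℓ−1} = ℓ − 2 − i_{m−2}. -/
/-- `n`-th coefficient of the sum of all relevant compact positive roots of type `D_ℓ`.
Positive roots: `Σ_{i=a}^{b} γ_i` (`1 ≤ a ≤ b ≤ ℓ−2`), `Σ_{i=a}^{ℓ−2} γ_i + γ_{ℓ−1}`,
`Σ_{i=a}^{ℓ−2} γ_i + γ_ℓ`, `Σ_{i=a}^{ℓ−2} γ_i + γ_{ℓ−1} + γ_ℓ` (`1 ≤ a ≤ ℓ−2`),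
`Σ_{i=a}^{b} γ_i + Σ_{i=b+1}^{ℓ−2} 2γ_i + γ_{ℓ−1} + γ_ℓ` (`1 ≤ a ≤ b ≤ ℓ−3`), and
the simple roots `γ_{ℓ−1}`, `γ_ℓ`; a root `Σ nᵢγᵢ` is compact iff `Σ_{i∈S} nᵢ` is even,
relevant iff moreover `Σ_{i∈S} nᵢ > 0`. -/
def deltaD (ℓ : ℕ) (S : Finset ℕ) (n : ℕ) : ℤ :=
  (∑ p ∈ (Finset.Icc 1 (ℓ - 2) ×ˢ Finset.Icc 1 (ℓ - 2)).filter
      (fun p => p.1 ≤ p.2 ∧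
        Even ((S ∩ Finset.Icc p.1 p.2).card) ∧
        0 < (S ∩ Finset.Icc p.1 p.2).card),
      (if p.1 ≤ n ∧ n ≤ p.2 then (1 : ℤ) else 0))
  + (∑ a ∈ (Finset.Icc 1 (ℓ - 2)).filter
      (fun a =>
        Even ((S ∩ Finset.Icc a (ℓ - 2)).card + (if ℓ - 1 ∈ S then 1 else 0)) ∧
        0 < (S ∩ Finset.Icc a (ℓ - 2)).card + (if ℓ - 1 ∈ S then 1 else 0)),
      ((if a ≤ n ∧ n ≤ ℓ - 2 then (1 : ℤ) else 0) + (if n = ℓ - 1 then (1 : ℤ) else 0)))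
  + (∑ a ∈ (Finset.Icc 1 (ℓ - 2)).filter
      (fun a =>
        Even ((S ∩ Finset.Icc a (ℓ - 2)).card + (if ℓ ∈ S then 1 else 0)) ∧
        0 < (S ∩ Finset.Icc a (ℓ - 2)).card + (if ℓ ∈ S then 1 else 0)),
      ((if a ≤ n ∧ n ≤ ℓ - 2 then (1 : ℤ) else 0) + (if n = ℓ then (1 : ℤ) else 0)))
  + (∑ a ∈ (Finset.Icc 1 (ℓ - 2)).filter
      (fun a =>
        Even ((S ∩ Finset.Icc a (ℓ - 2)).card + (if ℓ - 1 ∈ S then 1 else 0)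
          + (if ℓ ∈ S then 1 else 0)) ∧
        0 < (S ∩ Finset.Icc a (ℓ - 2)).card + (if ℓ - 1 ∈ S then 1 else 0)
          + (if ℓ ∈ S then 1 else 0)),
      ((if a ≤ n ∧ n ≤ ℓ - 2 then (1 : ℤ) else 0)
        + (if n = ℓ - 1 ∨ n = ℓ then (1 : ℤ) else 0)))
  + (∑ p ∈ (Finset.Icc 1 (ℓ - 3) ×ˢ Finset.Icc 1 (ℓ - 3)).filter
      (fun p => p.1 ≤ p.2 ∧
        Even ((S ∩ Finset.Icc p.1 p.2).card
          + 2 * (S ∩ Finset.Icc (p.2 + 1) (ℓ - 2)).card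
          + (if ℓ - 1 ∈ S then 1 else 0) + (if ℓ ∈ S then 1 else 0)) ∧
        0 < (S ∩ Finset.Icc p.1 p.2).card
          + 2 * (S ∩ Finset.Icc (p.2 + 1) (ℓ - 2)).card
          + (if ℓ - 1 ∈ S then 1 else 0) + (if ℓ ∈ S then 1 else 0)),
      ((if p.1 ≤ n ∧ n ≤ p.2 then (1 : ℤ) else 0)
        + (if p.2 + 1 ≤ n ∧ n ≤ ℓ - 2 then (2 : ℤ) else 0)
        + (if n = ℓ - 1 ∨ n = ℓ then (1 : ℤ) else 0)))
  + (if Even (if ℓ - 1 ∈ S then 1 else 0) ∧ 0 < (if ℓ - 1 ∈ S then 1 else 0) ∧ n = ℓ - 1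
      then (1 : ℤ) else 0)
  + (if Even (if ℓ ∈ S then 1 else 0) ∧ 0 < (if ℓ ∈ S then 1 else 0) ∧ n = ℓ
      then (1 : ℤ) else 0)

/-- type `D_ℓ`, both fork vertices painted:
`−δᶜ_{ℓ−2} + 2δᶜ_{ℓ−1} = ℓ − 2 − i_{m−2}`. -/
theorem stmt19 (ℓ m : ℕ) (hℓ : 4 ≤ ℓ) (hm : 2 ≤ m)
    (i : ℕ → ℕ) (h0 : i 0 = 0)
    (hmono : ∀ k ≤ m, i k < i (k + 1))
    (hm1 : i (m - 1) = ℓ - 1) (hmtop : i m = ℓ)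
    (hm2 : 3 ≤ m → i (m - 2) ≤ ℓ - 3) :
    -(deltaD ℓ ((Finset.Icc 1 m).image i) (ℓ - 2))
      + 2 * deltaD ℓ ((Finset.Icc 1 m).image i) (ℓ - 1)
      = (ℓ : ℤ) - 2 - (i (m - 2) : ℤ) := by
  set S : Finset ℕ := (Finset.Icc 1 m).image i with hS
  have hℓ1S : ℓ - 1 ∈ S := by
    rw [hS]
    exact Finset.mem_image.mpr ⟨m - 1, Finset.mem_Icc.mpr ⟨by omega, by omega⟩, hm1⟩
  have hℓS : ℓ ∈ S := by
    rw [hS]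
    exact Finset.mem_image.mpr ⟨m, Finset.mem_Icc.mpr ⟨by omega, le_refl m⟩, hmtop⟩
  have hn1 : ¬(ℓ - 2 = ℓ - 1) := by omega
  have hn2 : ¬(ℓ - 2 = ℓ) := by omega
  have hn3 : ¬(ℓ - 1 = ℓ) := by omega
  have hn4 : ¬(ℓ - 1 ≤ ℓ - 2) := by omega
  have hne1 : ¬ Even (1 : ℕ) := by decide
  have hle : ∀ k k', k ≤ k' → k' ≤ m → i k ≤ i k' := by
    intro k k' hkk'
    induction hkk' with
    | refl => exact fun _ => le_rfl
    | @step n h ih =>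
      intro hnm
      exact le_trans (ih (by omega)) (le_of_lt (hmono n (by omega)))
  have key : ∀ a, 1 ≤ a → ((S ∩ Finset.Icc a (ℓ - 2)).card = 0 ↔ i (m - 2) < a) := by
    intro a ha
    constructor
    · intro hc
      by_contra hcon
      push_neg at hcon
      rcases Nat.lt_or_ge m 3 with hm3 | hm3
      · have hz : m - 2 = 0 := by omega
        rw [hz, h0] at hcon; omega
      · have hq3 := hm2 hm3
        have hmem : i (m - 2) ∈ S := by
          rw [hS]
          exact Finset.mem_image.mpr ⟨m - 2, Finset.mem_Icc.mpr ⟨by omega, by omega⟩, rfl⟩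
        have hmem2 : i (m - 2) ∈ S ∩ Finset.Icc a (ℓ - 2) :=
          Finset.mem_inter.mpr ⟨hmem, Finset.mem_Icc.mpr ⟨hcon, by omega⟩⟩
        rw [Finset.card_eq_zero] at hc
        simp [hc] at hmem2
    · intro hlt
      rw [Finset.card_eq_zero]
      apply Finset.eq_empty_iff_forall_notMem.mpr
      intro x hx
      simp only [Finset.mem_inter, Finset.mem_Icc] at hx
      obtain ⟨hxS, hxa, hxb⟩ := hx
      rw [hS] at hxS
      obtain ⟨k, hk, rfl⟩ := Finset.mem_image.mp hxS
      rw [Finset.mem_Icc] at hk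
      have hk2 : k ≤ m - 2 := by
        by_contra hk2
        push_neg at hk2
        rcases (by omega : k = m - 1 ∨ k = m) with rfl | rfl
        · omega
        · omega
      have := hle k (m - 2) hk2 (by omega)
      omega
  have hq : i (m - 2) ≤ ℓ - 3 := by
    rcases Nat.lt_or_ge m 3 with h | h
    · have hz : m - 2 = 0 := by omega
      rw [hz, h0]; omega
    · exact hm2 h
  rw [deltaD, deltaD]
  simp only [hℓ1S, hℓS, if_true, hn1, hn2, hn3, hn4, hne1, if_false, le_refl, and_true, true_and,
    false_and, and_false, ite_false, or_self, false_or, or_false, not_false_iff, add_zero,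
    zero_add, Finset.sum_const_zero, Finset.sum_const, nsmul_eq_mul, mul_one]
  -- Evaluate the remaining sums
  have hA : (∑ p ∈ Finset.filter
        (fun p => p.1 ≤ p.2 ∧ Even (S ∩ Finset.Icc p.1 p.2).card ∧ 0 < (S ∩ Finset.Icc p.1 p.2).card)
        (Finset.Icc 1 (ℓ - 2) ×ˢ Finset.Icc 1 (ℓ - 2)),
      if p.1 ≤ ℓ - 2 ∧ ℓ - 2 ≤ p.2 then (1 : ℤ) else 0)
      = ((Finset.Icc 1 (ℓ - 2)).filter
          (fun a => Even (S ∩ Finset.Icc a (ℓ - 2)).card ∧ 0 < (S ∩ Finset.Icc a (ℓ - 2)).card)).card := by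
    have step : ∀ p ∈ Finset.filter
        (fun p => p.1 ≤ p.2 ∧ Even (S ∩ Finset.Icc p.1 p.2).card ∧ 0 < (S ∩ Finset.Icc p.1 p.2).card)
        (Finset.Icc 1 (ℓ - 2) ×ˢ Finset.Icc 1 (ℓ - 2)),
        (if p.1 ≤ ℓ - 2 ∧ ℓ - 2 ≤ p.2 then (1 : ℤ) else 0) = if p.2 = ℓ - 2 then 1 else 0 := by
      intro p hp
      simp only [Finset.mem_filter, Finset.mem_product, Finset.mem_Icc] at hp
      exact if_congr (by omega) rfl rfl
    rw [Finset.sum_congr rfl step, Finset.sum_boole]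
    congr 1
    refine Finset.card_bij (fun p _ => p.1) ?_ ?_ ?_
    · intro p hp
      simp only [Finset.mem_filter, Finset.mem_product, Finset.mem_Icc] at hp ⊢
      obtain ⟨⟨⟨⟨h1, h2⟩, h3, h4⟩, hab, hev, hpos⟩, hp2⟩ := hp
      rw [hp2] at hev hpos
      exact ⟨⟨h1, h2⟩, hev, hpos⟩
    · intro a ha b hb h
      have ha2 := (Finset.mem_filter.mp ha).2
      have hb2 := (Finset.mem_filter.mp hb).2
      exact Prod.ext h (ha2.trans hb2.symm)
    · intro b hb
      simp only [Finset.mem_filter, Finset.mem_Icc] at hb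
      obtain ⟨⟨hb1, hb2⟩, hev, hpos⟩ := hb
      refine ⟨(b, ℓ - 2), ?_, rfl⟩
      simp only [Finset.mem_filter, Finset.mem_product, Finset.mem_Icc]
      exact ⟨⟨⟨⟨hb1, hb2⟩, by omega, le_refl _⟩, hb2, hev, hpos⟩, trivial⟩
  have hE : (∑ p ∈ Finset.filter
        (fun p => p.1 ≤ p.2 ∧ Even (S ∩ Finset.Icc p.1 p.2).card ∧ 0 < (S ∩ Finset.Icc p.1 p.2).card)
        (Finset.Icc 1 (ℓ - 2) ×ˢ Finset.Icc 1 (ℓ - 2)),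
      if p.1 ≤ ℓ - 1 ∧ ℓ - 1 ≤ p.2 then (1 : ℤ) else 0) = 0 := by
    apply Finset.sum_eq_zero
    intro p hp
    simp only [Finset.mem_filter, Finset.mem_product, Finset.mem_Icc] at hp
    exact if_neg (by omega)
  have hB : ∀ (t : Finset ℕ), (∀ x ∈ t, x ≤ ℓ - 2) →
      (∑ x ∈ t, if x ≤ ℓ - 2 then (1 : ℤ) else 0) = t.card := by
    intro t ht
    rw [Finset.sum_congr rfl (fun x hx => if_pos (ht x hx)), Finset.sum_const, nsmul_eq_mul,
      mul_one]
  have hB2 := hB ((Finset.Icc 1 (ℓ - 2)).filter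
      (fun a => Even ((S ∩ Finset.Icc a (ℓ - 2)).card + 1) ∧ 0 < (S ∩ Finset.Icc a (ℓ - 2)).card + 1))
    (fun x hx => by
      have := (Finset.mem_filter.mp hx).1
      exact (Finset.mem_Icc.mp this).2)
  have hB4 := hB ((Finset.Icc 1 (ℓ - 2)).filter
      (fun a => Even ((S ∩ Finset.Icc a (ℓ - 2)).card + 1 + 1) ∧
        0 < (S ∩ Finset.Icc a (ℓ - 2)).card + 1 + 1))
    (fun x hx => by
      have := (Finset.mem_filter.mp hx).1
      exact (Finset.mem_Icc.mp this).2)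
  have hD2 : (∑ x ∈ Finset.filter
        (fun p => p.1 ≤ p.2 ∧
          Even ((S ∩ Finset.Icc p.1 p.2).card + 2 * (S ∩ Finset.Icc (p.2 + 1) (ℓ - 2)).card + 1 + 1) ∧
          0 < (S ∩ Finset.Icc p.1 p.2).card + 2 * (S ∩ Finset.Icc (p.2 + 1) (ℓ - 2)).card + 1 + 1)
        (Finset.Icc 1 (ℓ - 3) ×ˢ Finset.Icc 1 (ℓ - 3)),
      ((if x.1 ≤ ℓ - 2 ∧ ℓ - 2 ≤ x.2 then (1 : ℤ) else 0) + if x.2 + 1 ≤ ℓ - 2 then 2 else 0))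
      = 2 * (Finset.filter
        (fun p => p.1 ≤ p.2 ∧
          Even ((S ∩ Finset.Icc p.1 p.2).card + 2 * (S ∩ Finset.Icc (p.2 + 1) (ℓ - 2)).card + 1 + 1) ∧
          0 < (S ∩ Finset.Icc p.1 p.2).card + 2 * (S ∩ Finset.Icc (p.2 + 1) (ℓ - 2)).card + 1 + 1)
        (Finset.Icc 1 (ℓ - 3) ×ˢ Finset.Icc 1 (ℓ - 3))).card := by
    have step : ∀ x ∈ Finset.filter
        (fun p => p.1 ≤ p.2 ∧
          Even ((S ∩ Finset.Icc p.1 p.2).card + 2 * (S ∩ Finset.Icc (p.2 + 1) (ℓ - 2)).card + 1 + 1) ∧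
          0 < (S ∩ Finset.Icc p.1 p.2).card + 2 * (S ∩ Finset.Icc (p.2 + 1) (ℓ - 2)).card + 1 + 1)
        (Finset.Icc 1 (ℓ - 3) ×ˢ Finset.Icc 1 (ℓ - 3)),
        ((if x.1 ≤ ℓ - 2 ∧ ℓ - 2 ≤ x.2 then (1 : ℤ) else 0) + if x.2 + 1 ≤ ℓ - 2 then 2 else 0)
          = (2 : ℤ) := by
      intro x hx
      simp only [Finset.mem_filter, Finset.mem_product, Finset.mem_Icc] at hx
      obtain ⟨⟨⟨h1, h2⟩, h3, h4⟩, -⟩ := hx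
      rw [if_neg (by omega), if_pos (by omega), zero_add]
    rw [Finset.sum_congr rfl step, Finset.sum_const, nsmul_eq_mul]
    ring
  have hD1 : (∑ x ∈ Finset.filter
        (fun p => p.1 ≤ p.2 ∧
          Even ((S ∩ Finset.Icc p.1 p.2).card + 2 * (S ∩ Finset.Icc (p.2 + 1) (ℓ - 2)).card + 1 + 1) ∧
          0 < (S ∩ Finset.Icc p.1 p.2).card + 2 * (S ∩ Finset.Icc (p.2 + 1) (ℓ - 2)).card + 1 + 1)
        (Finset.Icc 1 (ℓ - 3) ×ˢ Finset.Icc 1 (ℓ - 3)),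
      ((if x.1 ≤ ℓ - 1 ∧ ℓ - 1 ≤ x.2 then (1 : ℤ) else 0) + 1))
      = (Finset.filter
        (fun p => p.1 ≤ p.2 ∧
          Even ((S ∩ Finset.Icc p.1 p.2).card + 2 * (S ∩ Finset.Icc (p.2 + 1) (ℓ - 2)).card + 1 + 1) ∧
          0 < (S ∩ Finset.Icc p.1 p.2).card + 2 * (S ∩ Finset.Icc (p.2 + 1) (ℓ - 2)).card + 1 + 1)
        (Finset.Icc 1 (ℓ - 3) ×ˢ Finset.Icc 1 (ℓ - 3))).card := by
    have step : ∀ x ∈ Finset.filter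
        (fun p => p.1 ≤ p.2 ∧
          Even ((S ∩ Finset.Icc p.1 p.2).card + 2 * (S ∩ Finset.Icc (p.2 + 1) (ℓ - 2)).card + 1 + 1) ∧
          0 < (S ∩ Finset.Icc p.1 p.2).card + 2 * (S ∩ Finset.Icc (p.2 + 1) (ℓ - 2)).card + 1 + 1)
        (Finset.Icc 1 (ℓ - 3) ×ˢ Finset.Icc 1 (ℓ - 3)),
        ((if x.1 ≤ ℓ - 1 ∧ ℓ - 1 ≤ x.2 then (1 : ℤ) else 0) + 1) = (1 : ℤ) := by
      intro x hx
      simp only [Finset.mem_filter, Finset.mem_product, Finset.mem_Icc] at hx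
      obtain ⟨⟨⟨h1, h2⟩, h3, h4⟩, -⟩ := hx
      rw [if_neg (by omega), zero_add]
    rw [Finset.sum_congr rfl step, Finset.sum_const, nsmul_eq_mul, mul_one]
  have hF4E : Finset.filter
      (fun a => Even ((S ∩ Finset.Icc a (ℓ - 2)).card + 1 + 1) ∧
        0 < (S ∩ Finset.Icc a (ℓ - 2)).card + 1 + 1) (Finset.Icc 1 (ℓ - 2))
      = Finset.filter (fun a => Even (S ∩ Finset.Icc a (ℓ - 2)).card) (Finset.Icc 1 (ℓ - 2)) := by
    apply Finset.filter_congr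
    intro a _
    constructor
    · rintro ⟨h, -⟩
      simpa [Nat.even_add_one, not_not] using h
    · intro h
      exact ⟨by simpa [Nat.even_add_one, not_not], by omega⟩
  have hsplit := Finset.card_filter_add_card_filter_not
    (s := Finset.filter (fun a => Even (S ∩ Finset.Icc a (ℓ - 2)).card) (Finset.Icc 1 (ℓ - 2)))
    (p := fun a => 0 < (S ∩ Finset.Icc a (ℓ - 2)).card)
  rw [Finset.filter_filter, Finset.filter_filter] at hsplit
  have hzero : Finset.filter
      (fun a => Even (S ∩ Finset.Icc a (ℓ - 2)).card ∧ ¬ 0 < (S ∩ Finset.Icc a (ℓ - 2)).card)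
      (Finset.Icc 1 (ℓ - 2)) = Finset.Icc (i (m - 2) + 1) (ℓ - 2) := by
    ext a
    simp only [Finset.mem_filter, Finset.mem_Icc]
    constructor
    · rintro ⟨⟨h1, h2⟩, -, hnp⟩
      have hc : (S ∩ Finset.Icc a (ℓ - 2)).card = 0 := by omega
      have := (key a h1).mp hc
      omega
    · rintro ⟨h1, h2⟩
      have ha1 : 1 ≤ a := by omega
      have hc : (S ∩ Finset.Icc a (ℓ - 2)).card = 0 := (key a ha1).mpr (by omega)
      exact ⟨⟨ha1, h2⟩, by simp [hc], by omega⟩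
  rw [hzero, Nat.card_Icc] at hsplit
  rw [hA, hE, hB2, hB4, hD2, hD1, hF4E]
  omega
end
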